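/- arXiv:2209.14561 — 2 statements merged into one kernel-verified Lean document; each statement's English description precedes it below -/
import Mathlib

section
/- Let $p,q:(a,b)\to\mathbb{R}$ be differentiable and let $u,v:(a,b)\to\mathbb{R}$ be twice differentiable solutions of $y''(t)+p(t)y'(t)+q(t)y(t)=0$ on $(a,b)$. Then the modulus function $m(t)=(u(t))^2+(v(t))^2$ is three times differentiable and satisfies Appell's equation $m'''(t)+3p(t)m''(t)+\big(2(p(t))^2+p'(t)+4q(t)\big)m'(t)+\big(4p(t)q(t)+2q'(t)\big)m(t)=0$ for all $t\in(a,b)$. -/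
open Real Set

/-- If `u` and `v` are twice differentiable solutions of
`y'' + p y' + q y = 0` on `(a,b)` (with `p`, `q` differentiable), then the modulus function `m = u² + v²`
is three times differentiable and satisfies Appell's equation
`m''' + 3 p m'' + (2 p² + p' + 4 q) m' + (4 p q + 2 q') m = 0` on `(a,b)`. -/
theorem stmt_3 (a b : ℝ) (p q u v : ℝ → ℝ)
    (hp : ∀ t ∈ Ioo a b, DifferentiableAt ℝ p t)
    (hq : ∀ t ∈ Ioo a b, DifferentiableAt ℝ q t)
    (hu : ∀ t ∈ Ioo a b, DifferentiableAt ℝ u t)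
    (hu' : ∀ t ∈ Ioo a b, DifferentiableAt ℝ (deriv u) t)
    (hv : ∀ t ∈ Ioo a b, DifferentiableAt ℝ v t)
    (hv' : ∀ t ∈ Ioo a b, DifferentiableAt ℝ (deriv v) t)
    (hue : ∀ t ∈ Ioo a b, deriv (deriv u) t + p t * deriv u t + q t * u t = 0)
    (hve : ∀ t ∈ Ioo a b, deriv (deriv v) t + p t * deriv v t + q t * v t = 0)
    (m : ℝ → ℝ) (hm : m = fun t => (u t) ^ 2 + (v t) ^ 2) :
    ∀ t ∈ Ioo a b,
      (DifferentiableAt ℝ m t ∧ DifferentiableAt ℝ (deriv m) t ∧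
        DifferentiableAt ℝ (deriv (deriv m)) t) ∧
      deriv (deriv (deriv m)) t + 3 * p t * deriv (deriv m) t
        + (2 * (p t) ^ 2 + deriv p t + 4 * q t) * deriv m t
        + (4 * p t * q t + 2 * deriv q t) * m t = 0 := by
  subst hm
  intro t ht
  set f1 : ℝ → ℝ := fun x => 2 * (u x * deriv u x) + 2 * (v x * deriv v x) with hf1
  set f2 : ℝ → ℝ := fun x =>
      2 * (deriv u x * deriv u x) + 2 * (deriv v x * deriv v x)
      - 2 * p x * (u x * deriv u x + v x * deriv v x)
      - 2 * q x * (u x * u x + v x * v x) with hf2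
  -- first derivative
  have hd1 : ∀ x ∈ Ioo a b, HasDerivAt (fun y => u y ^ 2 + v y ^ 2) (f1 x) x := by
    intro x hx
    have h := (((hu x hx).hasDerivAt).mul ((hu x hx).hasDerivAt)).add
      (((hv x hx).hasDerivAt).mul ((hv x hx).hasDerivAt))
    have h2 : (fun y => u y ^ 2 + v y ^ 2) = fun y => u y * u y + v y * v y := by
      funext y; ring
    rw [h2]
    refine h.congr_deriv ?_
    simp only [hf1]; ring
  have hm_eq : ∀ x ∈ Ioo a b, deriv (fun y => u y ^ 2 + v y ^ 2) x = f1 x :=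
    fun x hx => (hd1 x hx).deriv
  -- second derivative
  have hd2 : ∀ x ∈ Ioo a b, HasDerivAt f1 (f2 x) x := by
    intro x hx
    have h := ((((hu x hx).hasDerivAt).mul ((hu' x hx).hasDerivAt)).const_mul 2).add
      ((((hv x hx).hasDerivAt).mul ((hv' x hx).hasDerivAt)).const_mul 2)
    have hU2 : deriv (deriv u) x = -(p x * deriv u x + q x * u x) := by
      have := hue x hx; linarith
    have hV2 : deriv (deriv v) x = -(p x * deriv v x + q x * v x) := by
      have := hve x hx; linarith
    refine h.congr_deriv ?_
    simp only [hf2]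
    rw [hU2, hV2]; ring
  have hm2_eq : ∀ x ∈ Ioo a b, deriv (deriv (fun y => u y ^ 2 + v y ^ 2)) x = f2 x := by
    intro x hx
    have hev : deriv (fun y => u y ^ 2 + v y ^ 2) =ᶠ[nhds x] f1 :=
      Filter.eventuallyEq_of_mem (Ioo_mem_nhds hx.1 hx.2) hm_eq
    rw [hev.deriv_eq]
    exact (hd2 x hx).deriv
  have hs : Ioo a b ∈ nhds t := Ioo_mem_nhds ht.1 ht.2
  have hev1 : deriv (fun y => u y ^ 2 + v y ^ 2) =ᶠ[nhds t] f1 :=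
    Filter.eventuallyEq_of_mem hs hm_eq
  have hev2 : deriv (deriv (fun y => u y ^ 2 + v y ^ 2)) =ᶠ[nhds t] f2 :=
    Filter.eventuallyEq_of_mem hs hm2_eq
  -- third derivative
  have inner1 : HasDerivAt (fun x => u x * deriv u x + v x * deriv v x)
      (deriv u t * deriv u t + u t * deriv (deriv u) t
        + (deriv v t * deriv v t + v t * deriv (deriv v) t)) t :=
    (((hu t ht).hasDerivAt).mul ((hu' t ht).hasDerivAt)).add
      (((hv t ht).hasDerivAt).mul ((hv' t ht).hasDerivAt))
  have inner2 : HasDerivAt (fun x => u x * u x + v x * v x)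
      (deriv u t * u t + u t * deriv u t + (deriv v t * v t + v t * deriv v t)) t :=
    (((hu t ht).hasDerivAt).mul ((hu t ht).hasDerivAt)).add
      (((hv t ht).hasDerivAt).mul ((hv t ht).hasDerivAt))
  have termA := (((hu' t ht).hasDerivAt).mul ((hu' t ht).hasDerivAt)).const_mul 2
  have termB := (((hv' t ht).hasDerivAt).mul ((hv' t ht).hasDerivAt)).const_mul 2
  have termC := (((hp t ht).hasDerivAt).const_mul 2).mul inner1
  have termD := (((hq t ht).hasDerivAt).const_mul 2).mul inner2
  have hd3 := ((termA.add termB).sub termC).sub termD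
  have hd3' : HasDerivAt f2 _ t := hd3
  have hU2 : deriv (deriv u) t = -(p t * deriv u t + q t * u t) := by
    have := hue t ht; linarith
  have hV2 : deriv (deriv v) t = -(p t * deriv v t + q t * v t) := by
    have := hve t ht; linarith
  refine ⟨⟨(hd1 t ht).differentiableAt, ?_, ?_⟩, ?_⟩
  · exact (hd2 t ht).differentiableAt.congr_of_eventuallyEq hev1
  · exact hd3'.differentiableAt.congr_of_eventuallyEq hev2
  · rw [hm_eq t ht, hm2_eq t ht, hev2.deriv_eq, hd3'.deriv]
    simp only [hf1, hf2]
    rw [hU2, hV2]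
    ring
end

section
/- Let $p,q:(a,b)\to\mathbb{R}$ be continuously differentiable, and let $u,v:(a,b)\to\mathbb{R}$ be solutions of $y''(t)+p(t)y'(t)+q(t)y(t)=0$ on $(a,b)$ whose Wronskian $\omega(t)=u(t)v'(t)-u'(t)v(t)$ is nonzero on $(a,b)$ and whose modulus function $m(t)=(u(t))^2+(v(t))^2$ is nonzero on $(a,b)$. Then the function $\alpha'(t)=\omega(t)/\big((u(t))^2+(v(t))^2\big)$ is twice differentiable and satisfies Kummer's equation, i.e., $q(t)-\tfrac{(p(t))^2}{4}-\tfrac{p'(t)}{2}-(\alpha'(t))^2+\tfrac{3}{4}\left(\tfrac{\alpha''(t)}{\alpha'(t)}\right)^2-\tfrac{\alpha'''(t)}{2\alpha'(t)}=0$ for all $t\in(a,b)$, where $\alpha''$ and $\alpha'''$ denote the first and second derivatives of the function $\alpha'$. -/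
open Real Set

/-- If `u`, `v` are solutions of `y'' + p y' + q y = 0` on `(a,b)` (with
`p`, `q` continuously differentiable) whose Wronskian `ω = u v' - u' v` and modulus
function `m = u² + v²` are nonvanishing on `(a,b)`, then `α' = ω / (u² + v²)` is twice
differentiable and satisfies Kummer's equation on `(a,b)`. -/
theorem stmt_4 (a b : ℝ) (p q u v : ℝ → ℝ)
    (hp : ContDiffOn ℝ 1 p (Ioo a b))
    (hq : ContDiffOn ℝ 1 q (Ioo a b))
    (hu : ∀ t ∈ Ioo a b, DifferentiableAt ℝ u t)
    (hu' : ∀ t ∈ Ioo a b, DifferentiableAt ℝ (deriv u) t)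
    (hv : ∀ t ∈ Ioo a b, DifferentiableAt ℝ v t)
    (hv' : ∀ t ∈ Ioo a b, DifferentiableAt ℝ (deriv v) t)
    (hue : ∀ t ∈ Ioo a b, deriv (deriv u) t + p t * deriv u t + q t * u t = 0)
    (hve : ∀ t ∈ Ioo a b, deriv (deriv v) t + p t * deriv v t + q t * v t = 0)
    (hω : ∀ t ∈ Ioo a b, u t * deriv v t - deriv u t * v t ≠ 0)
    (hm : ∀ t ∈ Ioo a b, (u t) ^ 2 + (v t) ^ 2 ≠ 0)
    (α' : ℝ → ℝ)
    (hα' : α' = fun t => (u t * deriv v t - deriv u t * v t) / ((u t) ^ 2 + (v t) ^ 2)) :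
    ∀ t ∈ Ioo a b,
      (DifferentiableAt ℝ α' t ∧ DifferentiableAt ℝ (deriv α') t) ∧
      q t - (p t) ^ 2 / 4 - deriv p t / 2 - (α' t) ^ 2
        + 3 / 4 * (deriv α' t / α' t) ^ 2
        - deriv (deriv α') t / (2 * α' t) = 0 := by
  subst hα'
  -- second derivatives from the ODE
  have hu2 : ∀ x ∈ Ioo a b, deriv (deriv u) x = -(p x * deriv u x + q x * u x) := by
    intro x hx; have := hue x hx; linarith
  have hv2 : ∀ x ∈ Ioo a b, deriv (deriv v) x = -(p x * deriv v x + q x * v x) := by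
    intro x hx; have := hve x hx; linarith
  -- Wronskian derivative
  have hW : ∀ x ∈ Ioo a b, HasDerivAt (fun x => u x * deriv v x - deriv u x * v x)
      (-(p x) * (u x * deriv v x - deriv u x * v x)) x := by
    intro x hx
    have h1 := ((hu x hx).hasDerivAt.mul (hv' x hx).hasDerivAt).sub
      ((hu' x hx).hasDerivAt.mul (hv x hx).hasDerivAt)
    refine h1.congr_deriv ?_
    rw [hu2 x hx, hv2 x hx]; ring
  -- modulus derivative
  have hM : ∀ x ∈ Ioo a b, HasDerivAt (fun x => (u x) ^ 2 + (v x) ^ 2)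
      (2 * (u x * deriv u x + v x * deriv v x)) x := by
    intro x hx
    have h1 := (((hu x hx).hasDerivAt.pow 2).add ((hv x hx).hasDerivAt.pow 2))
    refine h1.congr_deriv ?_; ring
  -- derivative of α'
  have hA : ∀ x ∈ Ioo a b, HasDerivAt
      (fun x => (u x * deriv v x - deriv u x * v x) / ((u x) ^ 2 + (v x) ^ 2))
      ((-(p x) * (u x * deriv v x - deriv u x * v x) * ((u x) ^ 2 + (v x) ^ 2)
        - (u x * deriv v x - deriv u x * v x) * (2 * (u x * deriv u x + v x * deriv v x)))
        / ((u x) ^ 2 + (v x) ^ 2) ^ 2) x := by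
    intro x hx
    exact (hW x hx).div (hM x hx) (hm x hx)
  have hB : ∀ x ∈ Ioo a b,
      deriv (fun x => (u x * deriv v x - deriv u x * v x) / ((u x) ^ 2 + (v x) ^ 2)) x
      = (-(p x) * (u x * deriv v x - deriv u x * v x) * ((u x) ^ 2 + (v x) ^ 2)
        - (u x * deriv v x - deriv u x * v x) * (2 * (u x * deriv u x + v x * deriv v x)))
        / ((u x) ^ 2 + (v x) ^ 2) ^ 2 := fun x hx => (hA x hx).deriv
  intro t ht
  have hpd : HasDerivAt p (deriv p t) t := by
    have := (hp.differentiableOn one_ne_zero).differentiableAt (isOpen_Ioo.mem_nhds ht)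
    exact this.hasDerivAt
  -- derivative of N = 2(u u' + v v')
  have hN : HasDerivAt (fun x => 2 * (u x * deriv u x + v x * deriv v x))
      (2 * ((deriv u t) ^ 2 + u t * deriv (deriv u) t
        + (deriv v t) ^ 2 + v t * deriv (deriv v) t)) t := by
    have h1 := (((hu t ht).hasDerivAt.mul (hu' t ht).hasDerivAt).add
      ((hv t ht).hasDerivAt.mul (hv' t ht).hasDerivAt)).const_mul (2 : ℝ)
    refine h1.congr_deriv ?_; ring
  -- numerator of the formula for deriv α'
  have hG : HasDerivAt (fun x => -(p x) * (u x * deriv v x - deriv u x * v x)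
      * ((u x) ^ 2 + (v x) ^ 2)
      - (u x * deriv v x - deriv u x * v x) * (2 * (u x * deriv u x + v x * deriv v x)))
      ((-(deriv p t) * (u t * deriv v t - deriv u t * v t)
        + -(p t) * (-(p t) * (u t * deriv v t - deriv u t * v t)))
        * ((u t) ^ 2 + (v t) ^ 2)
        + (-(p t) * (u t * deriv v t - deriv u t * v t))
          * (2 * (u t * deriv u t + v t * deriv v t))
        - ((-(p t) * (u t * deriv v t - deriv u t * v t))
            * (2 * (u t * deriv u t + v t * deriv v t))
          + (u t * deriv v t - deriv u t * v t)
            * (2 * ((deriv u t) ^ 2 + u t * deriv (deriv u) t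
              + (deriv v t) ^ 2 + v t * deriv (deriv v) t)))) t := by
    exact ((hpd.neg.mul (hW t ht)).mul (hM t ht)).sub ((hW t ht).mul hN)
  have hM2 : HasDerivAt (fun x => ((u x) ^ 2 + (v x) ^ 2) ^ 2)
      (2 * ((u t) ^ 2 + (v t) ^ 2) ^ 1 * (2 * (u t * deriv u t + v t * deriv v t))) t :=
    (hM t ht).pow 2
  have hF := hG.div hM2 (pow_ne_zero 2 (hm t ht))
  -- deriv α' agrees with the explicit formula near t
  have heq : deriv (fun x => (u x * deriv v x - deriv u x * v x) / ((u x) ^ 2 + (v x) ^ 2))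
      =ᶠ[nhds t] (fun x =>
      (-(p x) * (u x * deriv v x - deriv u x * v x) * ((u x) ^ 2 + (v x) ^ 2)
        - (u x * deriv v x - deriv u x * v x) * (2 * (u x * deriv u x + v x * deriv v x)))
        / ((u x) ^ 2 + (v x) ^ 2) ^ 2) :=
    Filter.eventuallyEq_of_mem (isOpen_Ioo.mem_nhds ht) (fun x hx => hB x hx)
  have hdd := hF.congr_of_eventuallyEq heq
  refine ⟨⟨(hA t ht).differentiableAt, hdd.differentiableAt⟩, ?_⟩
  simp only []
  rw [hB t ht, hdd.deriv, hu2 t ht, hv2 t ht]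
  have hWt := hω t ht
  have hMt := hm t ht
  field_simp
  ring
end
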